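/- If for every topological space Z, the intersection ⋂_{x ∈ X} V_x is open for every continuously indexed family {V_x | x ∈ X} of open sets of Z, then X is compact. -/

import Mathlib

universe u

open Filter Set Topology

theorem stmt3 {X : Type u} [TopologicalSpace X]
    (h : ∀ (Z : Type u) [TopologicalSpace Z] (V : X → Set Z),
      (∀ x, IsOpen (V x)) → IsOpen {p : Z × X | p.1 ∈ V p.2} → IsOpen (⋂ x : X, V x)) :
    CompactSpace X := by
  constructor
  rw [isCompact_iff_ultrafilter_le_nhds]
  intro F _
  by_contra hc
  push_neg at hc
  have hcl : ∀ a : X, ¬ ClusterPt a (F : Filter X) := by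
    intro a ha
    exact hc a (mem_univ a) ((Ultrafilter.clusterPt_iff).mp ha)
  letI tZ : TopologicalSpace (Option X) :=
    { IsOpen := fun U => none ∈ U → some ⁻¹' U ∈ F
      isOpen_univ := fun _ => univ_mem
      isOpen_inter := fun U V hU hV hmem => by
        rw [Set.preimage_inter]; exact inter_mem (hU hmem.1) (hV hmem.2)
      isOpen_sUnion := fun s hs hmem => by
        obtain ⟨t, ht, hnt⟩ := hmem
        exact mem_of_superset (hs t ht hnt)
          (Set.preimage_mono (Set.subset_sUnion_of_mem ht)) }
  set D : Set (Option X × X) := {p | p.1 = some p.2} with hD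
  set V : X → Set (Option X) := fun x => {z | (z, x) ∉ closure D} with hV
  have hVopen : ∀ x, IsOpen (V x) := by
    intro x
    have hVeq : V x = (fun z : Option X => (z, x)) ⁻¹' (closure D)ᶜ := rfl
    rw [hVeq]
    exact (isClosed_closure.isOpen_compl).preimage
      (continuous_id.prodMk continuous_const)
  have hWeq : {p : Option X × X | p.1 ∈ V p.2} = (closure D)ᶜ := rfl
  have hW : IsOpen {p : Option X × X | p.1 ∈ V p.2} := by
    rw [hWeq]; exact isClosed_closure.isOpen_compl
  have hI := h (Option X) V hVopen hW
  have hnone : (none : Option X) ∈ ⋂ x, V x := by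
    rw [Set.mem_iInter]
    intro a
    simp only [hV, Set.mem_setOf_eq]
    intro hcontra
    apply hcl a
    rw [clusterPt_iff_nonempty]
    intro U hU S hS
    -- O is an open neighborhood of `none`
    have hO : IsOpen ({none} ∪ some '' S : Set (Option X)) := by
      intro _
      exact mem_of_superset hS (fun y hy => Or.inr ⟨y, hy, rfl⟩)
    have haint : a ∈ interior U := mem_interior_iff_mem_nhds.mpr hU
    have hopen : IsOpen (({none} ∪ some '' S : Set (Option X)) ×ˢ interior U) :=
      hO.prod isOpen_interior
    have hmem : (none, a) ∈ (({none} ∪ some '' S : Set (Option X)) ×ˢ interior U) :=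
      ⟨Or.inl rfl, haint⟩
    obtain ⟨p, ⟨hp1, hp2⟩, hpD⟩ :=
      mem_closure_iff.mp hcontra _ hopen hmem
    have hp1' : p.1 = some p.2 := hpD
    rw [hp1'] at hp1
    rcases hp1 with h1 | ⟨y, hyS, hy⟩
    · exact absurd h1 (by simp)
    · have : p.2 ∈ S := by
        have : y = p.2 := Option.some_injective X hy
        rwa [this] at hyS
      exact ⟨p.2, interior_subset hp2, this⟩
  have hmemF : some ⁻¹' (⋂ x, V x) ∈ F := hI hnone
  obtain ⟨a, ha⟩ := F.nonempty_of_mem hmemF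
  have haV : (some a : Option X) ∈ V a := Set.mem_iInter.mp ha a
  exact haV (subset_closure (show ((some a : Option X), a) ∈ D from rfl))
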